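/- The interval topology T_≪ induced on Minkowski space M = ℝ⁴ by the chronological order ≪ is not equal to the Zeeman topology Z (part of Theorem 2 of the paper). -/

import Mathlib

open Set Metric TopologicalSpace

noncomputable section

/-- Minkowski space `M = ℝ⁴` with the Euclidean metric/topology. -/
abbrev M4 : Type := EuclideanSpace ℝ (Fin 4)

/-- The Minkowski quadratic form `Q(x) = x₀² − x₁² − x₂² − x₃²`. -/
def Q (x : M4) : ℝ := x 0 ^ 2 - x 1 ^ 2 - x 2 ^ 2 - x 3 ^ 2

/-- Chronological order: `x ≪ y`. -/
def chron (x y : M4) : Prop := Q (y - x) > 0 ∧ x 0 < y 0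

/-- Causal order: `x ≺ y`. -/
def causal (x y : M4) : Prop := Q (y - x) ≥ 0 ∧ x 0 ≤ y 0

/-- Horismos: `x → y`. -/
def horismos (x y : M4) : Prop := Q (y - x) = 0 ∧ x ≠ y ∧ x 0 < y 0

/-- The light cone `N(x) = N⁺(x) ∪ N⁻(x)`. -/
def lightCone (x : M4) : Set M4 := {y | horismos x y} ∪ {y | horismos y x}

/-- The Zeeman topology `Z`, generated by the sets `Z_ε(x) = (B_ε(x) \ N(x)) ∪ {x}`. -/
def Zeeman : TopologicalSpace M4 :=
  TopologicalSpace.generateFrom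
    {S | ∃ (x : M4) (ε : ℝ), 0 < ε ∧ S = (Metric.ball x ε \ lightCone x) ∪ {x}}

/-- The interval topology `T_R` of a relation `R`, generated by the subbasis of
complements of the sets `R⁺(x) = {y | R x y}` and `R⁻(x) = {y | R y x}`. -/
def intervalTopology (R : M4 → M4 → Prop) : TopologicalSpace M4 :=
  TopologicalSpace.generateFrom
    ({S | ∃ x : M4, S = {y | R x y}ᶜ} ∪ {S | ∃ x : M4, S = {y | R y x}ᶜ})
/-- The spacelike test point `(0, R, 0, 0)`. -/
def eR (R : ℝ) : M4 := WithLp.toLp 2 ![0, R, 0, 0]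

lemma Q_eR_sub (R : ℝ) (x : M4) : Q (eR R - x) = x 0 ^ 2 - (R - x 1) ^ 2 - x 2 ^ 2 - x 3 ^ 2 := by
  simp [Q, eR]

lemma Q_sub_eR (R : ℝ) (x : M4) : Q (x - eR R) = x 0 ^ 2 - (x 1 - R) ^ 2 - x 2 ^ 2 - x 3 ^ 2 := by
  simp [Q, eR]

lemma not_chron_left (x : M4) :
    ∀ᶠ R in Filter.atTop, ¬ chron x (eR R) := by
  filter_upwards [Filter.eventually_ge_atTop (x 1 + |x 0| + 1)] with R hR
  intro h
  have hQ := h.1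
  rw [Q_eR_sub] at hQ
  nlinarith [sq_abs (x 0), abs_nonneg (x 0), sq_nonneg (x 2), sq_nonneg (x 3)]

lemma not_chron_right (x : M4) :
    ∀ᶠ R in Filter.atTop, ¬ chron (eR R) x := by
  filter_upwards [Filter.eventually_ge_atTop (x 1 + |x 0| + 1)] with R hR
  intro h
  have hQ := h.1
  rw [Q_sub_eR] at hQ
  nlinarith [sq_abs (x 0), abs_nonneg (x 0), sq_nonneg (x 2), sq_nonneg (x 3)]

/-- Every interval-open set containing `0` contains `eR R` for all large `R`. -/
lemma key {U : Set M4}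
    (hU : TopologicalSpace.GenerateOpen
      ({S | ∃ x : M4, S = {y | chron x y}ᶜ} ∪ {S | ∃ x : M4, S = {y | chron y x}ᶜ}) U) :
    (0 : M4) ∈ U → ∀ᶠ R in Filter.atTop, eR R ∈ U := by
  induction hU with
  | basic s hs =>
      intro _
      rcases hs with ⟨x, rfl⟩ | ⟨x, rfl⟩
      · exact not_chron_left x
      · exact not_chron_right x
  | univ => intro _; exact Filter.Eventually.of_forall fun _ => trivial
  | inter s t _ _ ihs iht =>
      intro h0
      exact (ihs h0.1).and (iht h0.2)
  | sUnion S _ ih =>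
      intro h0
      obtain ⟨s, hsS, h0s⟩ := h0
      exact (ih s hsS h0s).mono fun R hR => ⟨s, hsS, hR⟩

lemma abs_coord_le_norm (x : M4) (i : Fin 4) : |x i| ≤ ‖x‖ := by
  rw [EuclideanSpace.norm_eq]
  have h1 : ‖x i‖ ^ 2 ≤ ∑ j, ‖x j‖ ^ 2 :=
    Finset.single_le_sum (f := fun j => ‖x j‖ ^ 2) (fun j _ => sq_nonneg _) (Finset.mem_univ i)
  rw [← Real.norm_eq_abs]
  calc ‖x i‖ = Real.sqrt (‖x i‖ ^ 2) := (Real.sqrt_sq (norm_nonneg _)).symm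
    _ ≤ _ := Real.sqrt_le_sqrt h1

/-- The interval topology from the chronological order is not the Zeeman topology. -/
theorem interval_topology_chron_ne_Zeeman :
    intervalTopology chron ≠ Zeeman := by
  intro h
  -- Z₁(0) is Zeeman-open
  have hZ : Zeeman.IsOpen ((Metric.ball (0 : M4) 1 \ lightCone 0) ∪ {0}) :=
    TopologicalSpace.GenerateOpen.basic _ ⟨0, 1, one_pos, rfl⟩
  rw [← h] at hZ
  have h0 : (0 : M4) ∈ (Metric.ball (0 : M4) 1 \ lightCone 0) ∪ {0} := Or.inr rfl
  have := (key hZ h0).and (Filter.eventually_gt_atTop 1)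
  obtain ⟨R, hmem, hR1⟩ := this.exists
  have hR0 : (0:ℝ) < R := lt_trans one_pos hR1
  -- but eR R is not in that set
  have hne : eR R ≠ 0 := by
    intro hh
    have : eR R 1 = (0 : M4) 1 := by rw [hh]
    simp [eR] at this
    exact hR0.ne' this
  rcases hmem with ⟨hball, -⟩ | hsingle
  · have : ‖eR R‖ < 1 := by simpa [dist_zero_right] using hball
    have h2 : |eR R 1| ≤ ‖eR R‖ := abs_coord_le_norm _ _
    have : |R| < 1 := by
      have : |eR R 1| < 1 := lt_of_le_of_lt h2 this
      simpa [eR] using this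
    rw [abs_of_pos hR0] at this
    linarith
  · exact hne hsingle
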